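/- For every integer ℓ ≥ 1, the 2ℓ-th derivative at x = 0 of the function x ↦ e^{x/2}·(1−x)^{ℓ+1} equals ((ℓ+1)!/4^ℓ) · Σ_{k=0}^{ℓ+1} (−1)^k · 2^k · C(2ℓ,k) / (ℓ+1−k)!; consequently D_ℓ = (−1)^{ℓ+1} · J_ℓ / ℓ!, where J_ℓ denotes this 2ℓ-th derivative. -/

import Mathlib

open Real

/-- `D_ℓ = (−1)^{ℓ+1}·((ℓ+1)/4^ℓ)·∑_{k=0}^{ℓ+1} (−1)^k·2^k·C(2ℓ,k)/(ℓ+1−k)!`. -/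
noncomputable def Dcoef (l : ℕ) : ℝ :=
  (-1) ^ (l + 1) * (((l : ℝ) + 1) / 4 ^ l) *
    ∑ k ∈ Finset.range (l + 2),
      (-1) ^ k * 2 ^ k * (Nat.choose (2 * l) k : ℝ) / (Nat.factorial (l + 1 - k) : ℝ)

open Polynomial

noncomputable def Dop : Module.End ℝ (Polynomial ℝ) :=
  (Polynomial.derivative : Polynomial ℝ →ₗ[ℝ] Polynomial ℝ) + (1/2 : ℝ) • 1

lemma step_deriv (p : Polynomial ℝ) :
    deriv (fun x : ℝ => Real.exp (x/2) * p.eval x) =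
      fun x => Real.exp (x/2) * (Dop p).eval x := by
  funext x
  have h1 : HasDerivAt (fun x : ℝ => Real.exp (x/2)) (Real.exp (x/2) * (1/2)) x := by
    simpa using (HasDerivAt.exp ((hasDerivAt_id x).div_const 2))
  have h2 := p.hasDerivAt x
  rw [show deriv (fun x : ℝ => Real.exp (x/2) * p.eval x) x = _ from (h1.mul h2).deriv]
  simp [Dop, Polynomial.eval_smul]
  ring

lemma iter_formula (m : ℕ) (n : ℕ) :
    iteratedDeriv n (fun x : ℝ => Real.exp (x/2) * (1 - x)^m) =
      fun x => Real.exp (x/2) * ((Dop^n) ((1 - Polynomial.X : Polynomial ℝ)^m)).eval x := by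
  induction n with
  | zero => funext x; simp
  | succ n ih =>
      rw [iteratedDeriv_succ, ih, step_deriv, pow_succ', Module.End.mul_apply]

example : True := trivial

lemma eval0 (m k : ℕ) :
    (Polynomial.derivative^[k] ((1 - Polynomial.X : Polynomial ℝ)^m)).eval 0 =
      (-1 : ℝ)^k * (m.descFactorial k) := by
  have h1 : (1 - Polynomial.X : Polynomial ℝ) = (-1 : ℝ) • (Polynomial.X - Polynomial.C 1) := by
    simp [smul_sub]; ring
  rw [h1, _root_.smul_pow, Polynomial.iterate_derivative_smul,
    Polynomial.iterate_derivative_X_sub_pow]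
  simp only [Polynomial.eval_smul, Polynomial.eval_mul, Polynomial.eval_natCast, Polynomial.eval_pow,
    Polynomial.eval_sub, Polynomial.eval_X, Polynomial.eval_C, smul_eq_mul]
  rcases le_or_gt k m with h | h
  · have h2 : (-1 : ℝ)^(m-k) * (-1)^k = (-1)^m := by
      rw [← pow_add, Nat.sub_add_cancel h]
    have h3 : ((0:ℝ) - 1)^(m-k) = (-1 : ℝ)^(m-k) := by norm_num
    have hk : ((-1:ℝ)^k) * ((-1)^k) = 1 := by
      rw [← pow_add, ← two_mul, pow_mul]; norm_num
    have hm : ((-1:ℝ)^m) * ((-1)^m) = 1 := by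
      rw [← pow_add, ← two_mul, pow_mul]; norm_num
    have h4 : (-1:ℝ)^(m-k) = (-1)^m * (-1)^k := by
      calc (-1:ℝ)^(m-k) = (-1)^(m-k)*((-1)^k*(-1)^k) := by rw [hk, mul_one]
      _ = (-1)^m * (-1)^k := by rw [← mul_assoc, h2]
    rw [h3, h4, nsmul_eq_mul]
    linear_combination ((m.descFactorial k : ℝ)) * (-1:ℝ)^k * hm
  · rw [Nat.descFactorial_eq_zero_iff_lt.mpr h]
    simp

lemma expand_aux (m n : ℕ) :
    ((Dop^n) ((1 - Polynomial.X : Polynomial ℝ)^m)).eval 0 =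
      ∑ k ∈ Finset.range (n+1),
        (n.choose k : ℝ) * (1/2)^(n-k) * ((-1)^k * (m.descFactorial k)) := by
  have hc : Commute ((Polynomial.derivative : Polynomial ℝ →ₗ[ℝ] Polynomial ℝ))
      ((1/2:ℝ) • (1 : Module.End ℝ (Polynomial ℝ))) :=
    (Commute.one_right _).smul_right _
  rw [Dop, hc.add_pow]
  rw [LinearMap.sum_apply, Polynomial.eval_finset_sum]
  refine Finset.sum_congr rfl fun k hk => ?_
  rw [_root_.smul_pow, one_pow, Module.End.mul_apply, Module.End.mul_apply,
    Module.End.natCast_apply, LinearMap.smul_apply, Module.End.one_apply,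
    LinearMap.map_smul, Module.End.pow_apply]
  rw [Polynomial.iterate_derivative_smul, Polynomial.eval_smul, Polynomial.eval_smul,
    eval0, smul_eq_mul, nsmul_eq_mul]
  ring


/-- The `2ℓ`-th derivative of `x ↦ e^{x/2}(1−x)^{ℓ+1}` at `0` equals
`((ℓ+1)!/4^ℓ)·∑_{k=0}^{ℓ+1}(−1)^k 2^k C(2ℓ,k)/(ℓ+1−k)!`, and `D_ℓ = (−1)^{ℓ+1} J_ℓ/ℓ!`. -/
theorem stmt15 (l : ℕ) (hl : 1 ≤ l) :
    iteratedDeriv (2 * l) (fun x : ℝ => Real.exp (x / 2) * (1 - x) ^ (l + 1)) 0 =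
        (Nat.factorial (l + 1) : ℝ) / 4 ^ l *
          ∑ k ∈ Finset.range (l + 2),
            (-1) ^ k * 2 ^ k * (Nat.choose (2 * l) k : ℝ) / (Nat.factorial (l + 1 - k) : ℝ) ∧
      Dcoef l =
        (-1) ^ (l + 1) *
            iteratedDeriv (2 * l) (fun x : ℝ => Real.exp (x / 2) * (1 - x) ^ (l + 1)) 0 /
          (Nat.factorial l : ℝ) := by
  have hmain : iteratedDeriv (2 * l) (fun x : ℝ => Real.exp (x / 2) * (1 - x) ^ (l + 1)) 0 =
      (Nat.factorial (l + 1) : ℝ) / 4 ^ l *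
        ∑ k ∈ Finset.range (l + 2),
          (-1) ^ k * 2 ^ k * (Nat.choose (2 * l) k : ℝ) / (Nat.factorial (l + 1 - k) : ℝ) := by
    rw [iter_formula (l+1) (2*l)]
    norm_num
    rw [expand_aux (l+1) (2*l)]
    rw [Finset.mul_sum]
    rw [← Finset.sum_subset (show Finset.range (l+2) ⊆ Finset.range (2*l+1) by
      intro x hx; simp only [Finset.mem_range] at *; omega)]
    · refine Finset.sum_congr rfl fun k hk => ?_
      rw [Finset.mem_range] at hk
      have hkl : k ≤ l + 1 := by omega
      have hd : ((Nat.factorial (l+1-k)):ℝ) * (Nat.descFactorial (l+1) k) =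
          (Nat.factorial (l+1)) := by
        exact_mod_cast congrArg (Nat.cast (R := ℝ)) (Nat.factorial_mul_descFactorial hkl)
      have h2 : (2:ℝ)^(2*l-k) * 2^k = 4^l := by
        rw [← pow_add, Nat.sub_add_cancel (by omega), show (4:ℝ)=2^2 by norm_num, ← pow_mul]
      have hf : ((Nat.factorial (l+1-k)):ℝ) ≠ 0 := by positivity
      have h2n : (2:ℝ)^(2*l-k) ≠ 0 := by positivity
      have h4n : (4:ℝ)^l ≠ 0 := by positivity
      have hDF : ((Nat.descFactorial (l+1) k : ℝ)) =
          (Nat.factorial (l+1) : ℝ) / (Nat.factorial (l+1-k)) := by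
        rw [eq_div_iff hf, mul_comm]; exact hd
      rw [hDF, div_pow, one_pow]
      field_simp
      linear_combination (-(Nat.choose (2*l) k : ℝ)) * h2
    · intro k hk hk2
      rw [Finset.mem_range] at hk
      simp only [Finset.mem_range, not_lt] at hk2
      rw [Nat.descFactorial_eq_zero_iff_lt.mpr (by omega)]
      simp
  refine ⟨hmain, ?_⟩
  rw [hmain, Dcoef]
  have hfl : ((Nat.factorial l):ℝ) ≠ 0 := by positivity
  have h4n : (4:ℝ)^l ≠ 0 := by positivity
  have hfs : ((Nat.factorial (l+1)):ℝ) = ((l:ℝ)+1) * (Nat.factorial l) := by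
    exact_mod_cast congrArg (Nat.cast (R := ℝ)) (Nat.factorial_succ l)
  rw [hfs]
  field_simp
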